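/- Let 0 < α < n. For every sufficiently large prime p there exists a subset E ⊆ F^n (F the prime field of order p) such that c₁·p^α ≤ |E| ≤ c₂·p^α and |1̂_E(ξ)| ≤ C_n·√|E|·√(log p) for all ξ ≠ 0, and moreover, for any fixed η > 0 and any fixed set A ⊆ F^n with |A| ≥ p^{α/2}, one can additionally ensure |E ∩ A| ≤ η|A|. Here 1̂_E(ξ) = Σ_{x∈E} e(−x·ξ) with e(t) = e^{2πit/p}, and c₁, c₂, C_n are independent of p. -/

import Mathlib

open Finset

noncomputable def e (p : ℕ) (t : ZMod p) : ℂ :=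
  Complex.exp (2 * Real.pi * Complex.I * (t.val : ℂ) / (p : ℂ))

lemma e_eq_pow (p : ℕ) [NeZero p] (t : ZMod p) :
    e p t = Complex.exp (2 * Real.pi * Complex.I / p) ^ t.val := by
  rw [e, ← Complex.exp_nat_mul]
  congr 1
  ring

lemma zeta_pow_p (p : ℕ) [NeZero p] :
    Complex.exp (2 * Real.pi * Complex.I / p) ^ p = 1 := by
  rw [← Complex.exp_nat_mul]
  have hp : (p:ℂ) ≠ 0 := Nat.cast_ne_zero.mpr (NeZero.ne p)
  rw [show (p:ℂ) * (2 * Real.pi * Complex.I / p) = 2 * Real.pi * Complex.I by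
    field_simp]
  exact Complex.exp_two_pi_mul_I

lemma zeta_pow_mod (p : ℕ) [NeZero p] (k : ℕ) :
    Complex.exp (2 * Real.pi * Complex.I / p) ^ (k % p)
      = Complex.exp (2 * Real.pi * Complex.I / p) ^ k := by
  conv_rhs => rw [← Nat.mod_add_div k p]
  rw [pow_add, pow_mul, zeta_pow_p, one_pow, mul_one]

lemma e_add (p : ℕ) [NeZero p] (a b : ZMod p) : e p (a + b) = e p a * e p b := by
  rw [e_eq_pow, e_eq_pow, e_eq_pow, ← pow_add, ZMod.val_add, zeta_pow_mod]

lemma e_abs (p : ℕ) [NeZero p] (t : ZMod p) : ‖e p t‖ = 1 := by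
  have : e p t = Complex.exp (((2 * Real.pi * t.val / p : ℝ)) * Complex.I) := by
    rw [e]; congr 1; push_cast; ring
  rw [this, Complex.norm_exp_ofReal_mul_I]

lemma e_ne_one (p : ℕ) [NeZero p] (hp : 1 < p) (c : ZMod p) (hc : c ≠ 0) : e p c ≠ 1 := by
  intro h
  rw [e, Complex.exp_eq_one_iff] at h
  obtain ⟨k, hk⟩ := h
  have hp' : (p:ℂ) ≠ 0 := Nat.cast_ne_zero.mpr (NeZero.ne p)
  have hpi : (2 * (Real.pi:ℂ) * Complex.I) ≠ 0 := by
    simp [Real.pi_ne_zero, Complex.I_ne_zero, Complex.ofReal_ne_zero]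
  have hval : (c.val : ℂ) = k * p := by
    have h3 : (2 * (Real.pi:ℂ) * Complex.I * (c.val:ℂ) / p) * p
        = ((k:ℂ) * (2 * (Real.pi:ℂ) * Complex.I)) * p := by rw [hk]
    rw [div_mul_cancel₀ _ hp'] at h3
    have h4 : (2 * (Real.pi:ℂ) * Complex.I) * (c.val:ℂ)
        = (2 * (Real.pi:ℂ) * Complex.I) * ((k:ℂ) * p) := by linear_combination h3
    exact mul_left_cancel₀ hpi h4
  have hvalz : (c.val : ℤ) = k * p := by exact_mod_cast hval
  have h0 : 0 < c.val := by
    rcases Nat.pos_of_ne_zero (fun h => hc ((ZMod.val_eq_zero c).mp h)) with h; exact h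
  have hlt : c.val < p := ZMod.val_lt c
  have h0' : (0:ℤ) < (c.val : ℤ) := by exact_mod_cast h0
  have hlt' : (c.val : ℤ) < p := by exact_mod_cast hlt
  have hpz : (0:ℤ) < p := by
    have : 0 < p := by omega
    exact_mod_cast this
  rcases le_or_gt k 0 with hk0 | hk1
  · have : (k:ℤ) * p ≤ 0 := mul_nonpos_of_nonpos_of_nonneg hk0 hpz.le
    omega
  · have hk1' : (1:ℤ) ≤ k := hk1
    have : (p:ℤ) ≤ k * p := le_mul_of_one_le_left hpz.le hk1'
    omega

lemma sum_e_zero {p n : ℕ} [NeZero p] (hp : 1 < p) (ξ : Fin n → ZMod p) (hξ : ξ ≠ 0) :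
    ∑ x : Fin n → ZMod p, e p (-(∑ i, x i * ξ i)) = 0 := by
  obtain ⟨i₀, hi₀⟩ : ∃ i, ξ i ≠ 0 := by
    by_contra h; push_neg at h; exact hξ (funext h)
  set χ : (Fin n → ZMod p) → ℂ := fun x => e p (-(∑ i, x i * ξ i)) with hχ
  set y : Fin n → ZMod p := Pi.single i₀ 1 with hy
  have hsum_y : ∑ i, y i * ξ i = ξ i₀ := by
    rw [hy]
    rw [Finset.sum_eq_single i₀]
    · simp
    · intro i _ hne; simp [Pi.single_apply, hne]
    · intro h; exact absurd (Finset.mem_univ i₀) h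
  have hmul : ∀ x, χ (y + x) = χ y * χ x := by
    intro x
    rw [hχ]
    simp only
    rw [← e_add]
    congr 1
    have : ∑ i, (y + x) i * ξ i = (∑ i, y i * ξ i) + ∑ i, x i * ξ i := by
      rw [← Finset.sum_add_distrib]
      exact Finset.sum_congr rfl (fun i _ => by simp [add_mul])
    rw [this]; ring
  have hshift : ∑ x : Fin n → ZMod p, χ (y + x) = ∑ x : Fin n → ZMod p, χ x :=
    Fintype.sum_equiv (Equiv.addLeft y) _ _ (fun x => rfl)
  rw [Finset.sum_congr rfl (fun x _ => hmul x), ← Finset.mul_sum] at hshift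
  have hχy : χ y ≠ 1 := by
    rw [hχ]; simp only
    rw [hsum_y]
    exact e_ne_one p hp _ (neg_ne_zero.mpr hi₀)
  have hz : (χ y - 1) * (∑ x : Fin n → ZMod p, χ x) = 0 := by
    rw [sub_mul, one_mul, hshift, sub_self]
  rcases mul_eq_zero.mp hz with h | h
  · exact absurd (sub_eq_zero.mp h) hχy
  · exact h


lemma exp_quad {u : ℝ} (h : |u| ≤ 1) : Real.exp u ≤ 1 + u + u ^ 2 := by
  have h2 := Real.exp_bound h (n := 2) (by norm_num)
  have hs : ∑ m ∈ Finset.range 2, u ^ m / m.factorial = 1 + u := by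
    simp [Finset.sum_range_succ]
  rw [hs] at h2
  norm_num [Nat.factorial] at h2
  have := abs_le.mp h2
  nlinarith [this.2, sq_nonneg u]

lemma card_filter_val_lt (M m : ℕ) (hm : m ≤ M) :
    (univ.filter (fun v : Fin M => v.val < m)).card = m := by
  rcases eq_or_lt_of_le hm with h | h
  · subst h
    rw [Finset.filter_true_of_mem (fun v _ => v.isLt)]
    simp
  · have : univ.filter (fun v : Fin M => v.val < m) = Iio ⟨m, h⟩ := by
      ext v; simp [Fin.lt_def]
    rw [this, Fin.card_Iio]

lemma coin_mgf (M m : ℕ) (hM : 0 < M) (hm : m ≤ M) (c : ℝ) (hc : |c| ≤ 1) :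
    ∑ v : Fin M, Real.exp (c * ((if v.val < m then (1:ℝ) else 0) - m / M))
      ≤ M * Real.exp (c ^ 2 * (m / M)) := by
  set q : ℝ := (m : ℝ) / M with hq
  have hM' : (0:ℝ) < M := by exact_mod_cast hM
  have hq0 : 0 ≤ q := by positivity
  have hq1 : q ≤ 1 := by rw [hq, div_le_one hM']; exact_mod_cast hm
  have hstep : ∀ v : Fin M, Real.exp (c * ((if v.val < m then (1:ℝ) else 0) - q))
      = if v.val < m then Real.exp (c * (1 - q)) else Real.exp (c * (0 - q)) := by
    intro v; split <;> rfl
  rw [Finset.sum_congr rfl (fun v _ => hstep v)]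
  rw [Finset.sum_ite, Finset.sum_const, Finset.sum_const]
  rw [card_filter_val_lt M m hm]
  have hcc : (univ.filter (fun v : Fin M => ¬ v.val < m)).card = M - m := by
    have := Finset.card_filter_add_card_filter_not (s := (univ : Finset (Fin M)))
      (p := fun v : Fin M => v.val < m)
    rw [card_filter_val_lt M m hm] at this
    simp only [Finset.card_univ, Fintype.card_fin] at this
    omega
  rw [hcc]
  have hMm : ((M - m : ℕ) : ℝ) = (M : ℝ) - m := by
    push_cast [Nat.cast_sub hm]; ring
  have e1 : Real.exp (c * (1 - q)) ≤ 1 + c * (1 - q) + (c * (1 - q)) ^ 2 := by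
    apply exp_quad
    rw [abs_mul]
    calc |c| * |1 - q| ≤ 1 * 1 := by
          apply mul_le_mul hc _ (abs_nonneg _) zero_le_one
          rw [abs_le]; constructor <;> linarith
      _ = 1 := by ring
  have e2 : Real.exp (c * (0 - q)) ≤ 1 + c * (0 - q) + (c * (0 - q)) ^ 2 := by
    apply exp_quad
    rw [abs_mul]
    calc |c| * |0 - q| ≤ 1 * 1 := by
          apply mul_le_mul hc _ (abs_nonneg _) zero_le_one
          rw [abs_le]; constructor <;> linarith
      _ = 1 := by ring
  have hmq : (m : ℝ) = q * M := by rw [hq]; field_simp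
  have key : (m:ℝ) * (1 + c * (1 - q) + (c * (1 - q)) ^ 2)
      + ((M:ℝ) - m) * (1 + c * (0 - q) + (c * (0 - q)) ^ 2)
      = M * (1 + c ^ 2 * (q * (1 - q))) := by
    rw [hmq]; ring
  have hfin : (1 : ℝ) + c ^ 2 * (q * (1 - q)) ≤ Real.exp (c ^ 2 * q) := by
    calc (1 : ℝ) + c ^ 2 * (q * (1 - q)) ≤ 1 + c ^ 2 * q := by nlinarith [sq_nonneg c]
      _ ≤ Real.exp (c ^ 2 * q) := by
          have := Real.add_one_le_exp (c ^ 2 * q); linarith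
  calc m • Real.exp (c * (1 - q)) + (M - m) • Real.exp (c * (0 - q))
      ≤ (m:ℝ) * (1 + c * (1 - q) + (c * (1 - q)) ^ 2)
        + ((M:ℝ) - m) * (1 + c * (0 - q) + (c * (0 - q)) ^ 2) := by
        rw [nsmul_eq_mul, nsmul_eq_mul, hMm]
        have h1 : (0:ℝ) ≤ (m:ℝ) := by positivity
        have h2 : (0:ℝ) ≤ (M:ℝ) - m := by
          have : (m:ℝ) ≤ M := by exact_mod_cast hm
          linarith
        gcongr
    _ = M * (1 + c ^ 2 * (q * (1 - q))) := key
    _ ≤ M * Real.exp (c ^ 2 * q) := by gcongr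

lemma mgf_prod (ι : Type) [Fintype ι] [DecidableEq ι] (M m : ℕ) (hM : 0 < M) (hm : m ≤ M)
    (T : Finset ι) (a : ι → ℝ) (ha : ∀ x, |a x| ≤ 1) (lam : ℝ) (h0 : 0 ≤ lam) (h1 : lam ≤ 1) :
    ∑ ω : ι → Fin M, Real.exp (lam * ∑ x ∈ T, a x * ((if (ω x).val < m then (1:ℝ) else 0) - m / M))
      ≤ (M:ℝ) ^ (Fintype.card ι) * Real.exp (lam ^ 2 * ((m:ℝ) / M) * T.card) := by
  set q : ℝ := (m : ℝ) / M with hqdef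
  have hq0 : 0 ≤ q := by positivity
  set F : ι → Fin M → ℝ := fun x v =>
    if x ∈ T then Real.exp ((lam * a x) * ((if v.val < m then (1:ℝ) else 0) - q)) else 1
    with hF
  have step1 : ∀ ω : ι → Fin M,
      Real.exp (lam * ∑ x ∈ T, a x * ((if (ω x).val < m then (1:ℝ) else 0) - q))
      = ∏ x : ι, F x (ω x) := by
    intro ω
    rw [Finset.mul_sum, Real.exp_sum (f := fun x => lam * (a x * ((if (ω x).val < m then (1:ℝ) else 0) - q)))]
    rw [hF]
    rw [Fintype.prod_ite_mem T (fun x => Real.exp ((lam * a x) * ((if (ω x).val < m then (1:ℝ) else 0) - q)))]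
    exact Finset.prod_congr rfl (fun x _ => by rw [mul_assoc])
  calc ∑ ω : ι → Fin M, Real.exp (lam * ∑ x ∈ T, a x * ((if (ω x).val < m then (1:ℝ) else 0) - q))
      = ∑ ω : ι → Fin M, ∏ x : ι, F x (ω x) := by
        exact Finset.sum_congr rfl (fun ω _ => step1 ω)
    _ = ∏ x : ι, ∑ v : Fin M, F x v := by
        rw [Finset.prod_univ_sum (fun _ => (univ : Finset (Fin M))) F, Fintype.piFinset_univ]
    _ ≤ ∏ x : ι, ((M:ℝ) * if x ∈ T then Real.exp (lam ^ 2 * q) else 1) := by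
        apply Finset.prod_le_prod
        · intro x _
          apply Finset.sum_nonneg
          intro v _
          dsimp only [F]
          split <;> positivity
        · intro x _
          rw [hF]
          by_cases hx : x ∈ T
          · simp only [hx, if_true]
            calc ∑ v : Fin M, Real.exp ((lam * a x) * ((if v.val < m then (1:ℝ) else 0) - q))
                ≤ M * Real.exp ((lam * a x) ^ 2 * q) := by
                  apply coin_mgf M m hM hm
                  rw [abs_mul]
                  calc |lam| * |a x| ≤ 1 * 1 :=
                        mul_le_mul (abs_le.mpr ⟨by linarith, h1⟩) (ha x) (abs_nonneg _) zero_le_one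
                    _ = 1 := by ring
              _ ≤ M * Real.exp (lam ^ 2 * q) := by
                  have h2 : (a x) ^ 2 ≤ 1 := by
                    rw [← sq_abs]; nlinarith [abs_nonneg (a x), ha x]
                  have h3 : (lam * a x) ^ 2 ≤ lam ^ 2 := by
                    rw [mul_pow]; nlinarith [sq_nonneg lam]
                  have h4 : (lam * a x) ^ 2 * q ≤ lam ^ 2 * q :=
                    mul_le_mul_of_nonneg_right h3 hq0
                  have h5 : (0:ℝ) ≤ (M:ℝ) := by positivity
                  exact mul_le_mul_of_nonneg_left (Real.exp_le_exp.mpr h4) h5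
          · simp [hx]
    _ = (M:ℝ) ^ (Fintype.card ι) * Real.exp (lam ^ 2 * q * T.card) := by
        rw [Finset.prod_mul_distrib, Finset.prod_const, Finset.card_univ,
          Fintype.prod_ite_mem T (fun _ => Real.exp (lam ^ 2 * q)), Finset.prod_const,
          ← Real.exp_nat_mul]
        ring_nf

lemma tail_count (ι : Type) [Fintype ι] [DecidableEq ι] (M m : ℕ) (hM : 0 < M) (hm : m ≤ M)
    (T : Finset ι) (a : ι → ℝ) (ha : ∀ x, |a x| ≤ 1) (lam t : ℝ) (h0 : 0 ≤ lam) (h1 : lam ≤ 1) :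
    ((univ.filter (fun ω : ι → Fin M =>
        t ≤ ∑ x ∈ T, a x * ((if (ω x).val < m then (1:ℝ) else 0) - m / M))).card : ℝ)
      ≤ (M:ℝ) ^ (Fintype.card ι) * Real.exp (-(lam * t) + lam ^ 2 * ((m:ℝ) / M) * T.card) := by
  set S : (ι → Fin M) → ℝ := fun ω => ∑ x ∈ T, a x * ((if (ω x).val < m then (1:ℝ) else 0) - m / M)
    with hS
  set B := univ.filter (fun ω : ι → Fin M => t ≤ S ω) with hB
  have key : (B.card : ℝ) * Real.exp (lam * t)
      ≤ (M:ℝ) ^ (Fintype.card ι) * Real.exp (lam ^ 2 * ((m:ℝ) / M) * T.card) := by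
    calc (B.card : ℝ) * Real.exp (lam * t) = ∑ _ω ∈ B, Real.exp (lam * t) := by
          rw [Finset.sum_const, nsmul_eq_mul]
      _ ≤ ∑ ω ∈ B, Real.exp (lam * S ω) := by
          apply Finset.sum_le_sum
          intro ω hω
          rw [hB, Finset.mem_filter] at hω
          exact Real.exp_le_exp.mpr (mul_le_mul_of_nonneg_left hω.2 h0)
      _ ≤ ∑ ω : ι → Fin M, Real.exp (lam * S ω) := by
          apply Finset.sum_le_sum_of_subset_of_nonneg (Finset.subset_univ B)
          intro ω _ _; positivity
      _ ≤ (M:ℝ) ^ (Fintype.card ι) * Real.exp (lam ^ 2 * ((m:ℝ) / M) * T.card) :=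
          mgf_prod ι M m hM hm T a ha lam h0 h1
  have hexp : (0:ℝ) < Real.exp (lam * t) := Real.exp_pos _
  rw [Real.exp_add, Real.exp_neg]
  calc (B.card : ℝ) ≤ ((M:ℝ) ^ (Fintype.card ι) * Real.exp (lam ^ 2 * ((m:ℝ) / M) * T.card))
        / Real.exp (lam * t) := (le_div_iff₀ hexp).mpr key
    _ = (M:ℝ) ^ (Fintype.card ι) * ((Real.exp (lam * t))⁻¹ * Real.exp (lam ^ 2 * ((m:ℝ) / M) * T.card)) := by
        rw [div_eq_mul_inv]; ring
noncomputable def dft {p n : ℕ} [NeZero p] (f : (Fin n → ZMod p) → ℂ)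
    (ξ : Fin n → ZMod p) : ℂ :=
  ∑ x : Fin n → ZMod p, e p (-(∑ i, x i * ξ i)) * f x

lemma shift_mean {ι : Type} [Fintype ι] (a b : ι → ℝ) (q : ℝ) (h : ∑ x, a x = 0) :
    ∑ x, a x * b x = ∑ x, a x * (b x - q) := by
  simp only [mul_sub]
  rw [Finset.sum_sub_distrib, ← Finset.sum_mul, h, zero_mul, sub_zero]

lemma sqrt_le_self' {x : ℝ} (h : 1 ≤ x) : Real.sqrt x ≤ x := by
  calc Real.sqrt x ≤ Real.sqrt (x ^ 2) := Real.sqrt_le_sqrt (by nlinarith)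
    _ = x := Real.sqrt_sq (by linarith)

set_option maxHeartbeats 1000000 in
/-- Random Salem-type sets in `F^n`: for `0 < α < n` and large primes `p` there
is `E ⊆ F^n` with `|E| ≈ p^α`, `|1̂_E(ξ)| ≤ C_n √|E| √(log p)` for `ξ ≠ 0`,
and, for any fixed `η > 0` and any `A ⊆ F^n` with `|A| ≥ p^{α/2}`, additionally
`|E ∩ A| ≤ η |A|`. -/
theorem salem_set_exists (n : ℕ) (α : ℝ) (hα0 : 0 < α) (hαn : α < n) :
    ∃ c₁ : ℝ, 0 < c₁ ∧ ∃ c₂ : ℝ, 0 < c₂ ∧ ∃ Cn : ℝ, 0 < Cn ∧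
      ∀ η : ℝ, 0 < η →
        ∃ p₀ : ℕ, ∀ (p : ℕ) [Fact p.Prime], p₀ ≤ p →
          ∀ A : Finset (Fin n → ZMod p), (p : ℝ) ^ (α / 2) ≤ (A.card : ℝ) →
            ∃ E : Finset (Fin n → ZMod p),
              c₁ * (p : ℝ) ^ α ≤ (E.card : ℝ) ∧
              (E.card : ℝ) ≤ c₂ * (p : ℝ) ^ α ∧
              (∀ ξ : Fin n → ZMod p, ξ ≠ 0 →
                ‖dft (fun x => if x ∈ E then (1 : ℂ) else 0) ξ‖
                  ≤ Cn * Real.sqrt E.card * Real.sqrt (Real.log p)) ∧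
              ((E ∩ A).card : ℝ) ≤ η * (A.card : ℝ) := by
  classical
  refine ⟨1/2, by norm_num, 3, by norm_num, 8*((n:ℝ)+2), by positivity, ?_⟩
  intro η hη
  -- eventually-large conditions
  have ev1 : ∀ᶠ y : ℝ in Filter.atTop, (7:ℝ) ≤ y := Filter.eventually_ge_atTop 7
  have ev2 : ∀ᶠ y : ℝ in Filter.atTop, ((n:ℝ)+2) * Real.log y ≤ y ^ α := by
    have h := (isLittleO_log_rpow_atTop hα0).bound (c := 1/((n:ℝ)+2)) (by positivity)
    filter_upwards [h, Filter.eventually_ge_atTop (1:ℝ)] with y hy hy1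
    rw [Real.norm_eq_abs, Real.norm_eq_abs, abs_of_nonneg (Real.log_nonneg hy1),
      abs_of_nonneg (Real.rpow_nonneg (by linarith) _)] at hy
    have hn2 : (0:ℝ) < (n:ℝ)+2 := by positivity
    rw [div_mul_eq_mul_div, le_div_iff₀ hn2, one_mul] at hy
    linarith only [hy]
  have ev3 : ∀ᶠ y : ℝ in Filter.atTop, 2 * y ^ (α - (n:ℝ)) ≤ η/4 := by
    have h : Filter.Tendsto (fun y : ℝ => y ^ (α - (n:ℝ))) Filter.atTop (nhds 0) := by
      have hrw : α - (n:ℝ) = -((n:ℝ) - α) := by ring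
      rw [hrw]
      exact tendsto_rpow_neg_atTop (by linarith)
    filter_upwards [h.eventually_lt_const (show (0:ℝ) < η/8 by positivity)] with y hy
    linarith only [hy]
  have ev4 : ∀ᶠ y : ℝ in Filter.atTop, 16 * Real.log 8 ≤ y ^ α :=
    (tendsto_rpow_atTop hα0).eventually_ge_atTop _
  have ev5 : ∀ᶠ y : ℝ in Filter.atTop, (4/η) * Real.log 4 ≤ y ^ (α/2) :=
    (tendsto_rpow_atTop (by linarith : (0:ℝ) < α/2)).eventually_ge_atTop _
  obtain ⟨p₀, hp₀⟩ := Filter.eventually_atTop.mp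
    (tendsto_natCast_atTop_atTop.eventually ((((ev1.and ev2).and ev3).and ev4).and ev5))
  refine ⟨p₀, ?_⟩
  intro p hFp hp A hAcard
  obtain ⟨⟨⟨⟨h7, hlog⟩, hsmallq⟩, h16⟩, hA5⟩ := hp₀ p hp
  set y : ℝ := (p:ℝ) with hydef
  have hy0 : (0:ℝ) < y := by linarith only [h7]
  have hy1 : (1:ℝ) ≤ y := by linarith only [h7]
  have hlogy0 : 0 ≤ Real.log y := Real.log_nonneg hy1
  set M : ℕ := p ^ n with hMdef
  have hp2 : 2 ≤ p := by
    by_contra h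
    push_neg at h
    have : (p:ℝ) ≤ 1 := by exact_mod_cast Nat.lt_succ_iff.mp h
    linarith only [h7, this]
  have hM0 : 0 < M := by
    have : 0 < p := by omega
    exact pow_pos this n
  have hcard : Fintype.card (Fin n → ZMod p) = M := by
    rw [Fintype.card_fun, ZMod.card, Fintype.card_fin]
  have hMr : (M:ℝ) = y ^ (n:ℝ) := by
    rw [hMdef, Real.rpow_natCast]; push_cast; ring
  have hyα1 : (1:ℝ) ≤ y ^ α := by
    calc (1:ℝ) = y ^ (0:ℝ) := (Real.rpow_zero y).symm
      _ ≤ y ^ α := Real.rpow_le_rpow_of_exponent_le hy1 hα0.le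
  set m : ℕ := ⌈y ^ α⌉₊ with hmdef
  have hmge : y ^ α ≤ (m:ℝ) := Nat.le_ceil _
  have hm1r : (1:ℝ) ≤ (m:ℝ) := le_trans hyα1 hmge
  have hm1 : 1 ≤ m := by exact_mod_cast hm1r
  have hmle : (m:ℝ) ≤ 2 * y ^ α := by
    have := Nat.ceil_lt_add_one (by positivity : (0:ℝ) ≤ y ^ α)
    rw [← hmdef] at this
    linarith only [this, hyα1]
  have hmM : m ≤ M := by
    rw [hmdef]
    apply Nat.ceil_le.mpr
    calc y ^ α ≤ y ^ (n:ℝ) := Real.rpow_le_rpow_of_exponent_le hy1 hαn.le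
      _ = (M:ℝ) := hMr.symm
  set q : ℝ := (m:ℝ)/(M:ℝ) with hqdef
  have hMr0 : (0:ℝ) < (M:ℝ) := by exact_mod_cast hM0
  have hq0 : 0 ≤ q := by positivity
  have hqM : q * M = m := by rw [hqdef]; exact div_mul_cancel₀ _ (ne_of_gt hMr0)
  have hqsmall : q ≤ η/4 := by
    have h1 : q ≤ 2 * y ^ α / y ^ (n:ℝ) := by
      rw [hqdef, hMr]
      gcongr
    have h2 : 2 * y ^ α / y ^ (n:ℝ) = 2 * y ^ (α - (n:ℝ)) := by
      rw [Real.rpow_sub hy0]; ring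
    linarith only [h1, h2.le, hsmallq]
  -- constants for the Fourier bound
  set C : ℝ := 4 * Real.sqrt ((n:ℝ)+2) with hCdef
  have hC0 : 0 < C := by rw [hCdef]; positivity
  have hCne : C ≠ 0 := ne_of_gt hC0
  have hC2 : C^2 = 16*((n:ℝ)+2) := by
    rw [hCdef, mul_pow, Real.sq_sqrt (by positivity)]; norm_num
  set t3 : ℝ := (C/2) * Real.sqrt ((m:ℝ) * Real.log y) with ht3def
  have ht30 : 0 ≤ t3 := by
    rw [ht3def]; exact mul_nonneg (by linarith only [hC0]) (Real.sqrt_nonneg _)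
  set lam3 : ℝ := t3 / (2*(m:ℝ)) with hlam3def
  have hlam30 : 0 ≤ lam3 := by
    rw [hlam3def]; exact div_nonneg ht30 (by linarith only [hm1r])
  have hC2log : C^2 * Real.log y ≤ 16 * (m:ℝ) := by
    rw [hC2]; linarith only [hlog, hmge]
  have ht3le : t3 ≤ 2*(m:ℝ) := by
    have h1 : (m:ℝ) * Real.log y ≤ (4*(m:ℝ)/C)^2 := by
      have he : (4*(m:ℝ)/C)^2 = 16*(m:ℝ)^2/C^2 := by ring
      rw [he, le_div_iff₀ (pow_pos hC0 2)]
      have hmul := mul_le_mul_of_nonneg_left hC2log (show (0:ℝ) ≤ (m:ℝ) by positivity)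
      linarith only [hmul]
    have h2 : Real.sqrt ((m:ℝ) * Real.log y) ≤ 4*(m:ℝ)/C := by
      calc Real.sqrt ((m:ℝ) * Real.log y) ≤ Real.sqrt ((4*(m:ℝ)/C)^2) := Real.sqrt_le_sqrt h1
        _ = 4*(m:ℝ)/C := Real.sqrt_sq (div_nonneg (by positivity) hC0.le)
    calc t3 = (C/2) * Real.sqrt ((m:ℝ) * Real.log y) := rfl
      _ ≤ (C/2) * (4*(m:ℝ)/C) := mul_le_mul_of_nonneg_left h2 (by linarith only [hC0])
      _ = 2*(m:ℝ) := by field_simp; ring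
  have hlam31 : lam3 ≤ 1 := by
    rw [hlam3def, div_le_one (by positivity)]; exact ht3le
  -- characters
  have hp1 : 1 < p := by omega
  set ψ : (Fin n → ZMod p) → (Fin n → ZMod p) → ℂ := fun ξ x => e p (-(∑ i, x i * ξ i)) with hψdef
  have hψabs : ∀ ξ x, ‖ψ ξ x‖ = 1 := fun ξ x => e_abs p _
  have hψre : ∀ ξ x, |(ψ ξ x).re| ≤ 1 := by
    intro ξ x
    calc |(ψ ξ x).re| ≤ ‖ψ ξ x‖ := Complex.abs_re_le_norm _
      _ = 1 := hψabs ξ x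
  have hψim : ∀ ξ x, |(ψ ξ x).im| ≤ 1 := by
    intro ξ x
    calc |(ψ ξ x).im| ≤ ‖ψ ξ x‖ := Complex.abs_im_le_norm _
      _ = 1 := hψabs ξ x
  have hψsum : ∀ ξ : Fin n → ZMod p, ξ ≠ 0 → ∑ x, ψ ξ x = 0 := fun ξ hξ => sum_e_zero hp1 ξ hξ
  -- bad events
  set R : ℝ := (M:ℝ) ^ (Fintype.card (Fin n → ZMod p)) with hRdef
  have hR0 : 0 < R := by rw [hRdef]; exact pow_pos hMr0 _
  set Bad : ℝ → Finset (Fin n → ZMod p) → ((Fin n → ZMod p) → ℝ)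
      → Finset ((Fin n → ZMod p) → Fin M) :=
    fun t T a => univ.filter (fun ω => t ≤ ∑ x ∈ T,
      a x * ((if (ω x).val < m then (1:ℝ) else 0) - q)) with hBaddef
  have key : ∀ (T : Finset (Fin n → ZMod p)) (a : (Fin n → ZMod p) → ℝ), (∀ x, |a x| ≤ 1) →
      ∀ lam t : ℝ, 0 ≤ lam → lam ≤ 1 →
      ((Bad t T a).card : ℝ) ≤ R * Real.exp (-(lam*t) + lam^2 * q * T.card) := by
    intro T a ha lam t h0 h1
    simp only [hBaddef, hqdef, hRdef]
    exact tail_count _ M m hM0 hmM T a ha lam t h0 h1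
  -- membership in bad events
  have hnotBad : ∀ (t : ℝ) (T : Finset (Fin n → ZMod p)) (a : (Fin n → ZMod p) → ℝ),
      ∀ ω : (Fin n → ZMod p) → Fin M, ω ∉ Bad t T a →
      ∑ x ∈ T, a x * ((if (ω x).val < m then (1:ℝ) else 0) - q) < t := by
    intro t T a ω h
    by_contra hc
    push_neg at hc
    refine h ?_
    simp only [hBaddef]
    exact Finset.mem_filter.mpr ⟨Finset.mem_univ _, hc⟩
  -- tail bound for |E|
  have hexp18 : Real.exp (-((m:ℝ)/16)) ≤ 1/8 := by
    have h1 : Real.log 8 ≤ (m:ℝ)/16 := by linarith only [h16, hmge]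
    calc Real.exp (-((m:ℝ)/16)) ≤ Real.exp (-(Real.log 8)) := by
          apply Real.exp_le_exp.mpr; linarith only [h1]
      _ = 1/8 := by rw [Real.exp_neg, Real.exp_log (by norm_num : (0:ℝ) < 8)]; norm_num
  have hunivcard : (((univ : Finset (Fin n → ZMod p)).card : ℕ) : ℝ) = (M:ℝ) := by
    rw [Finset.card_univ, hcard]
  have hb1 : ((Bad ((m:ℝ)/2) univ (fun _ => (1:ℝ))).card : ℝ) ≤ R * (1/8) := by
    refine le_trans (key univ _ (fun x => by norm_num) (1/4) _ (by norm_num) (by norm_num)) ?_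
    have harg : -((1/4:ℝ)*((m:ℝ)/2)) + (1/4:ℝ)^2 * q * (((univ : Finset (Fin n → ZMod p)).card : ℕ) : ℝ)
        = -((m:ℝ)/16) := by
      rw [hunivcard]; linear_combination (1/16:ℝ) * hqM
    rw [harg]
    exact mul_le_mul_of_nonneg_left hexp18 hR0.le
  have hb2 : ((Bad ((m:ℝ)/2) univ (fun _ => (-1:ℝ))).card : ℝ) ≤ R * (1/8) := by
    refine le_trans (key univ _ (fun x => by norm_num) (1/4) _ (by norm_num) (by norm_num)) ?_
    have harg : -((1/4:ℝ)*((m:ℝ)/2)) + (1/4:ℝ)^2 * q * (((univ : Finset (Fin n → ZMod p)).card : ℕ) : ℝ)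
        = -((m:ℝ)/16) := by
      rw [hunivcard]; linear_combination (1/16:ℝ) * hqM
    rw [harg]
    exact mul_le_mul_of_nonneg_left hexp18 hR0.le
  have hb4 : ((Bad (η/2 * A.card) A (fun _ => (1:ℝ))).card : ℝ) ≤ R * (1/4) := by
    refine le_trans (key A _ (fun x => by norm_num) 1 _ zero_le_one le_rfl) ?_
    have hAc0 : (0:ℝ) ≤ (A.card:ℝ) := Nat.cast_nonneg _
    have hlog4 : Real.log 4 ≤ (η/4) * (A.card:ℝ) := by
      have h1 : (4/η) * Real.log 4 ≤ (A.card:ℝ) := le_trans hA5 hAcard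
      have := mul_le_mul_of_nonneg_left h1 (le_of_lt (show (0:ℝ) < η/4 by positivity))
      calc Real.log 4 = (η/4) * ((4/η) * Real.log 4) := by field_simp
        _ ≤ (η/4) * (A.card:ℝ) := this
    have harg : -(1*(η/2 * (A.card:ℝ))) + (1:ℝ)^2 * q * (A.card:ℝ) ≤ -((η/4) * (A.card:ℝ)) := by
      have := mul_le_mul_of_nonneg_right hqsmall hAc0
      linarith only [this]
    calc R * Real.exp (-(1*(η/2 * (A.card:ℝ))) + (1:ℝ)^2 * q * (A.card:ℝ))
        ≤ R * Real.exp (-((η/4) * (A.card:ℝ))) :=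
          mul_le_mul_of_nonneg_left (Real.exp_le_exp.mpr harg) hR0.le
      _ ≤ R * (1/4) := by
          apply mul_le_mul_of_nonneg_left ?_ hR0.le
          calc Real.exp (-((η/4) * (A.card:ℝ))) ≤ Real.exp (-(Real.log 4)) := by
                apply Real.exp_le_exp.mpr; linarith only [hlog4]
            _ = 1/4 := by rw [Real.exp_neg, Real.exp_log (by norm_num : (0:ℝ) < 4)]; norm_num
  -- tail bound per frequency
  have hexpξ : -(lam3*t3) + lam3^2 * q * (((univ : Finset (Fin n → ZMod p)).card : ℕ) : ℝ)
      = -(((n:ℝ)+2) * Real.log y) := by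
    rw [hunivcard]
    have hm0 : (m:ℝ) ≠ 0 := by positivity
    have hM0' : (M:ℝ) ≠ 0 := ne_of_gt hMr0
    have h3 : t3^2 = (C^2/4) * ((m:ℝ) * Real.log y) := by
      rw [ht3def, mul_pow, Real.sq_sqrt (mul_nonneg (Nat.cast_nonneg m) hlogy0)]; ring
    have h1 : lam3 * t3 = t3^2/(2*(m:ℝ)) := by rw [hlam3def]; field_simp [hm0]
    have h2 : lam3^2 * q * (M:ℝ) = t3^2/(4*(m:ℝ)) := by
      rw [hlam3def, hqdef]; field_simp [hm0, hM0']; ring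
    rw [h1, h2, h3, hC2]
    field_simp [hm0]
    ring
  set Bξ : (Fin n → ZMod p) → Finset ((Fin n → ZMod p) → Fin M) :=
    fun ξ => (Bad t3 univ (fun x => (ψ ξ x).re) ∪ Bad t3 univ (fun x => -(ψ ξ x).re))
        ∪ (Bad t3 univ (fun x => (ψ ξ x).im) ∪ Bad t3 univ (fun x => -(ψ ξ x).im)) with hBξdef
  have hbξ : ∀ ξ : Fin n → ZMod p,
      ((Bξ ξ).card : ℝ) ≤ R * (4 * Real.exp (-(((n:ℝ)+2) * Real.log y))) := by
    intro ξ
    have k1 := key univ (fun x => (ψ ξ x).re) (hψre ξ) lam3 t3 hlam30 hlam31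
    have k2 := key univ (fun x => -(ψ ξ x).re) (fun x => by rw [abs_neg]; exact hψre ξ x) lam3 t3 hlam30 hlam31
    have k3 := key univ (fun x => (ψ ξ x).im) (hψim ξ) lam3 t3 hlam30 hlam31
    have k4 := key univ (fun x => -(ψ ξ x).im) (fun x => by rw [abs_neg]; exact hψim ξ x) lam3 t3 hlam30 hlam31
    rw [hexpξ] at k1 k2 k3 k4
    have hcle : (Bξ ξ).card
        ≤ ((Bad t3 univ (fun x => (ψ ξ x).re)).card + (Bad t3 univ (fun x => -(ψ ξ x).re)).card)
          + ((Bad t3 univ (fun x => (ψ ξ x).im)).card + (Bad t3 univ (fun x => -(ψ ξ x).im)).card) := by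
      simp only [hBξdef]
      exact le_trans (Finset.card_union_le _ _)
        (add_le_add (Finset.card_union_le _ _) (Finset.card_union_le _ _))
    have hcle' := (Nat.cast_le (α := ℝ)).mpr hcle
    push_cast at hcle'
    linarith only [k1, k2, k3, k4, hcle']
  -- sum over frequencies
  have hMexp : (M:ℝ) * (4 * Real.exp (-(((n:ℝ)+2) * Real.log y))) ≤ 1/4 := by
    have hrw : Real.exp (-(((n:ℝ)+2) * Real.log y)) = y ^ (-((n:ℝ)+2)) := by
      rw [Real.rpow_def_of_pos hy0]; congr 1; ring
    have hprod : y ^ ((n:ℝ)) * y ^ (-((n:ℝ)+2)) = y ^ (-(2:ℝ)) := by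
      rw [← Real.rpow_add hy0]; congr 1; ring
    have hy2 : y ^ (-(2:ℝ)) ≤ 1/49 := by
      rw [Real.rpow_neg hy0.le, show ((2:ℝ)) = ((2:ℕ):ℝ) by norm_num, Real.rpow_natCast]
      have h49 : (49:ℝ) ≤ y^2 := by
        have h77 : (7:ℝ)*7 ≤ y*y := mul_le_mul h7 h7 (by norm_num) (by linarith only [h7])
        calc (49:ℝ) = 7*7 := by norm_num
          _ ≤ y*y := h77
          _ = y^2 := (sq y).symm
      have := inv_anti₀ (by norm_num : (0:ℝ) < 49) h49
      linarith only [this]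
    calc (M:ℝ) * (4 * Real.exp (-(((n:ℝ)+2) * Real.log y)))
        = 4 * (y ^ ((n:ℝ)) * y ^ (-((n:ℝ)+2))) := by rw [hrw, hMr]; ring
      _ = 4 * y ^ (-(2:ℝ)) := by rw [hprod]
      _ ≤ 4 * (1/49) := mul_le_mul_of_nonneg_left hy2 (by norm_num)
      _ ≤ 1/4 := by norm_num
  have hbiU : (((univ.filter (fun ξ : Fin n → ZMod p => ξ ≠ 0)).biUnion Bξ).card : ℝ)
      ≤ R * (1/4) := by
    have h1 := Finset.card_biUnion_le
      (s := univ.filter (fun ξ : Fin n → ZMod p => ξ ≠ 0)) (t := Bξ)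
    have h2 : (((univ.filter (fun ξ : Fin n → ZMod p => ξ ≠ 0)).biUnion Bξ).card : ℝ)
        ≤ ∑ ξ ∈ univ.filter (fun ξ : Fin n → ZMod p => ξ ≠ 0), ((Bξ ξ).card : ℝ) := by
      have := (Nat.cast_le (α := ℝ)).mpr h1
      push_cast at this
      exact this
    have h3 : ∑ ξ ∈ univ.filter (fun ξ : Fin n → ZMod p => ξ ≠ 0), ((Bξ ξ).card : ℝ)
        ≤ ∑ _ξ ∈ univ.filter (fun ξ : Fin n → ZMod p => ξ ≠ 0),
            R * (4 * Real.exp (-(((n:ℝ)+2) * Real.log y))) :=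
      Finset.sum_le_sum (fun ξ _ => hbξ ξ)
    have h4 : ∑ _ξ ∈ univ.filter (fun ξ : Fin n → ZMod p => ξ ≠ 0),
        R * (4 * Real.exp (-(((n:ℝ)+2) * Real.log y)))
        = ((univ.filter (fun ξ : Fin n → ZMod p => ξ ≠ 0)).card : ℝ)
          * (R * (4 * Real.exp (-(((n:ℝ)+2) * Real.log y)))) := by
      rw [Finset.sum_const, nsmul_eq_mul]
    have h5 : ((univ.filter (fun ξ : Fin n → ZMod p => ξ ≠ 0)).card : ℝ) ≤ (M:ℝ) := by
      have := Finset.card_filter_le (univ : Finset (Fin n → ZMod p)) (fun ξ => ξ ≠ 0)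
      rw [Finset.card_univ, hcard] at this
      exact_mod_cast this
    have h6 : ((univ.filter (fun ξ : Fin n → ZMod p => ξ ≠ 0)).card : ℝ)
          * (R * (4 * Real.exp (-(((n:ℝ)+2) * Real.log y))))
        ≤ (M:ℝ) * (R * (4 * Real.exp (-(((n:ℝ)+2) * Real.log y)))) := by
      apply mul_le_mul_of_nonneg_right h5
      exact mul_nonneg hR0.le (by positivity)
    have h7' : (M:ℝ) * (R * (4 * Real.exp (-(((n:ℝ)+2) * Real.log y))))
        = R * ((M:ℝ) * (4 * Real.exp (-(((n:ℝ)+2) * Real.log y)))) := by ring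
    have h8 : R * ((M:ℝ) * (4 * Real.exp (-(((n:ℝ)+2) * Real.log y)))) ≤ R * (1/4) :=
      mul_le_mul_of_nonneg_left hMexp hR0.le
    linarith only [h2, h3, h4, h6, h7', h8]
  -- the global bad set
  set BigBad : Finset ((Fin n → ZMod p) → Fin M) :=
    ((Bad ((m:ℝ)/2) univ (fun _ => (1:ℝ)) ∪ Bad ((m:ℝ)/2) univ (fun _ => (-1:ℝ)))
      ∪ Bad (η/2 * A.card) A (fun _ => (1:ℝ)))
      ∪ (univ.filter (fun ξ : Fin n → ZMod p => ξ ≠ 0)).biUnion Bξ with hBB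
  have hR_eq : (((univ : Finset ((Fin n → ZMod p) → Fin M)).card : ℕ) : ℝ) = R := by
    rw [Finset.card_univ, Fintype.card_fun, Fintype.card_fin, hRdef, Nat.cast_pow]
  have hBBcard : ((BigBad.card : ℕ) : ℝ) < R := by
    have c1 : BigBad.card ≤ ((Bad ((m:ℝ)/2) univ (fun _ => (1:ℝ)) ∪ Bad ((m:ℝ)/2) univ (fun _ => (-1:ℝ)))
        ∪ Bad (η/2 * A.card) A (fun _ => (1:ℝ))).card
        + ((univ.filter (fun ξ : Fin n → ZMod p => ξ ≠ 0)).biUnion Bξ).card := by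
      simp only [hBB]
      exact Finset.card_union_le _ _
    have c2 : ((Bad ((m:ℝ)/2) univ (fun _ => (1:ℝ)) ∪ Bad ((m:ℝ)/2) univ (fun _ => (-1:ℝ)))
        ∪ Bad (η/2 * A.card) A (fun _ => (1:ℝ))).card
        ≤ ((Bad ((m:ℝ)/2) univ (fun _ => (1:ℝ))).card + (Bad ((m:ℝ)/2) univ (fun _ => (-1:ℝ))).card)
          + (Bad (η/2 * A.card) A (fun _ => (1:ℝ))).card :=
      le_trans (Finset.card_union_le _ _) (add_le_add_left (Finset.card_union_le _ _) _)
    have c1' := (Nat.cast_le (α := ℝ)).mpr c1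
    have c2' := (Nat.cast_le (α := ℝ)).mpr c2
    push_cast at c1' c2'
    linarith only [c1', c2', hb1, hb2, hb4, hbiU, hR0]
  obtain ⟨ω, hω⟩ : ∃ ω : (Fin n → ZMod p) → Fin M, ω ∉ BigBad := by
    by_contra h
    push_neg at h
    have hsub : (univ : Finset ((Fin n → ZMod p) → Fin M)) ⊆ BigBad := fun ω _ => h ω
    have hle := Finset.card_le_card hsub
    have hle' := (Nat.cast_le (α := ℝ)).mpr hle
    rw [hR_eq] at hle'
    linarith only [hle', hBBcard]
  have hω1 : ω ∉ Bad ((m:ℝ)/2) univ (fun _ => (1:ℝ)) := fun hc =>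
    hω (by rw [hBB]; exact Finset.mem_union_left _ (Finset.mem_union_left _ (Finset.mem_union_left _ hc)))
  have hω2 : ω ∉ Bad ((m:ℝ)/2) univ (fun _ => (-1:ℝ)) := fun hc =>
    hω (by rw [hBB]; exact Finset.mem_union_left _ (Finset.mem_union_left _ (Finset.mem_union_right _ hc)))
  have hω4 : ω ∉ Bad (η/2 * A.card) A (fun _ => (1:ℝ)) := fun hc =>
    hω (by rw [hBB]; exact Finset.mem_union_left _ (Finset.mem_union_right _ hc))
  have hωξ : ∀ ξ : Fin n → ZMod p, ξ ≠ 0 → ω ∉ Bξ ξ := fun ξ hξ hc =>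
    hω (by
      rw [hBB]
      refine Finset.mem_union_right _ (Finset.mem_biUnion.mpr ⟨ξ, ?_, hc⟩)
      simp [hξ])
  -- the set E
  set E : Finset (Fin n → ZMod p) := univ.filter (fun x => (ω x).val < m) with hE
  have hSsum : ∀ T : Finset (Fin n → ZMod p),
      ∑ x ∈ T, (1:ℝ) * ((if (ω x).val < m then (1:ℝ) else 0) - q)
      = ((T.filter (fun x => (ω x).val < m)).card : ℝ) - q * T.card := by
    intro T
    simp only [one_mul]
    rw [Finset.sum_sub_distrib, Finset.sum_boole, Finset.sum_const, nsmul_eq_mul]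
    ring
  have hEcard : ∑ x ∈ univ, (1:ℝ) * ((if (ω x).val < m then (1:ℝ) else 0) - q)
      = (E.card:ℝ) - (m:ℝ) := by
    rw [hSsum univ, ← hE, hunivcard, hqM]
  have hnegsum : ∀ a : (Fin n → ZMod p) → ℝ,
      ∑ x ∈ univ, (-(a x)) * ((if (ω x).val < m then (1:ℝ) else 0) - q)
      = -∑ x ∈ univ, a x * ((if (ω x).val < m then (1:ℝ) else 0) - q) := by
    intro a
    rw [← Finset.sum_neg_distrib]
    exact Finset.sum_congr rfl (fun x _ => by ring)
  have s1 := hnotBad _ _ _ ω hω1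
  have s2 := hnotBad _ _ _ ω hω2
  rw [hEcard] at s1
  have hneg1 : ∑ x ∈ univ, (-1:ℝ) * ((if (ω x).val < m then (1:ℝ) else 0) - q)
      = -((E.card:ℝ) - (m:ℝ)) := by
    rw [← hEcard, ← Finset.sum_neg_distrib]
    exact Finset.sum_congr rfl (fun x _ => by ring)
  rw [hneg1] at s2
  have hElb : (m:ℝ)/2 < (E.card:ℝ) := by linarith only [s2]
  have hEub : (E.card:ℝ) < (3/2) * (m:ℝ) := by linarith only [s1]
  refine ⟨E, ?_, ?_, ?_, ?_⟩
  · -- lower bound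
    linarith only [hmge, hElb]
  · -- upper bound
    linarith only [hmle, hEub]
  · -- Fourier bound
    intro ξ hξ
    have hnot := hωξ ξ hξ
    simp only [hBξdef, Finset.mem_union, not_or] at hnot
    obtain ⟨⟨hre1, hre2⟩, him1, him2⟩ := hnot
    have sre1 := hnotBad _ _ _ ω hre1
    have sre2 := hnotBad _ _ _ ω hre2
    have sim1 := hnotBad _ _ _ ω him1
    have sim2 := hnotBad _ _ _ ω him2
    rw [hnegsum (fun x => (ψ ξ x).re)] at sre2
    rw [hnegsum (fun x => (ψ ξ x).im)] at sim2
    -- re and im of the dft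
    have hterm : ∀ (g : (Fin n → ZMod p) → ℂ), (∀ x, g x = ψ ξ x) → ∀ x : Fin n → ZMod p,
        (g x * (if x ∈ E then (1:ℂ) else 0)).re
        = (ψ ξ x).re * (if (ω x).val < m then (1:ℝ) else 0) ∧
        (g x * (if x ∈ E then (1:ℂ) else 0)).im
        = (ψ ξ x).im * (if (ω x).val < m then (1:ℝ) else 0) := by
      intro g hg x
      rw [hg]
      by_cases hx : (ω x).val < m
      · have hxE : x ∈ E := by rw [hE]; simp [hx]
        simp [hxE, hx]
      · have hxE : x ∉ E := by rw [hE]; simp [hx]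
        simp [hxE, hx]
    have hsum_re : ∑ x, (ψ ξ x).re = 0 := by
      rw [← Complex.re_sum, hψsum ξ hξ, Complex.zero_re]
    have hsum_im : ∑ x, (ψ ξ x).im = 0 := by
      rw [← Complex.im_sum, hψsum ξ hξ, Complex.zero_im]
    have hre_eq : (dft (fun x => if x ∈ E then (1:ℂ) else 0) ξ).re
        = ∑ x ∈ univ, (ψ ξ x).re * ((if (ω x).val < m then (1:ℝ) else 0) - q) := by
      have h1 : (dft (fun x => if x ∈ E then (1:ℂ) else 0) ξ).re
          = ∑ x, (ψ ξ x).re * (if (ω x).val < m then (1:ℝ) else 0) := by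
        unfold dft
        rw [Complex.re_sum]
        exact Finset.sum_congr rfl (fun x _ => (hterm _ (fun _ => rfl) x).1)
      rw [h1]
      exact shift_mean _ _ q hsum_re
    have him_eq : (dft (fun x => if x ∈ E then (1:ℂ) else 0) ξ).im
        = ∑ x ∈ univ, (ψ ξ x).im * ((if (ω x).val < m then (1:ℝ) else 0) - q) := by
      have h1 : (dft (fun x => if x ∈ E then (1:ℂ) else 0) ξ).im
          = ∑ x, (ψ ξ x).im * (if (ω x).val < m then (1:ℝ) else 0) := by
        unfold dft
        rw [Complex.im_sum]
        exact Finset.sum_congr rfl (fun x _ => (hterm _ (fun _ => rfl) x).2)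
      rw [h1]
      exact shift_mean _ _ q hsum_im
    have habs_re : |(dft (fun x => if x ∈ E then (1:ℂ) else 0) ξ).re| ≤ t3 := by
      rw [hre_eq]; rw [abs_le]; constructor <;> [linarith only [sre2]; linarith only [sre1]]
    have habs_im : |(dft (fun x => if x ∈ E then (1:ℂ) else 0) ξ).im| ≤ t3 := by
      rw [him_eq]; rw [abs_le]; constructor <;> [linarith only [sim2]; linarith only [sim1]]
    have hnorm : ‖dft (fun x => if x ∈ E then (1:ℂ) else 0) ξ‖ ≤ 2 * t3 := by
      calc ‖dft (fun x => if x ∈ E then (1:ℂ) else 0) ξ‖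
          ≤ |(dft (fun x => if x ∈ E then (1:ℂ) else 0) ξ).re|
            + |(dft (fun x => if x ∈ E then (1:ℂ) else 0) ξ).im| :=
          Complex.norm_le_abs_re_add_abs_im _
        _ ≤ 2 * t3 := by linarith only [habs_re, habs_im]
    -- convert 2*t3 into the desired form
    have h2t3 : 2 * t3 = C * (Real.sqrt (m:ℝ) * Real.sqrt (Real.log y)) := by
      rw [ht3def, Real.sqrt_mul (Nat.cast_nonneg m)]; ring
    have hm2E : (m:ℝ) ≤ 2 * (E.card:ℝ) := by linarith only [hElb]
    have hsqm : Real.sqrt (m:ℝ) ≤ Real.sqrt 2 * Real.sqrt (E.card:ℝ) := by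
      calc Real.sqrt (m:ℝ) ≤ Real.sqrt (2 * (E.card:ℝ)) := Real.sqrt_le_sqrt hm2E
        _ = Real.sqrt 2 * Real.sqrt (E.card:ℝ) := Real.sqrt_mul (by norm_num) _
    have hCn : C * Real.sqrt 2 ≤ 8*((n:ℝ)+2) := by
      have hn0 : (0:ℝ) ≤ (n:ℝ) := Nat.cast_nonneg n
      have h1 : Real.sqrt 2 ≤ 2 := sqrt_le_self' (by norm_num)
      have h2 : Real.sqrt ((n:ℝ)+2) ≤ (n:ℝ)+2 := sqrt_le_self' (by linarith only [hn0])
      rw [hCdef]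
      have hmm := mul_le_mul h2 h1 (Real.sqrt_nonneg _) (by linarith only [hn0])
      calc 4 * Real.sqrt ((n:ℝ)+2) * Real.sqrt 2 = 4 * (Real.sqrt ((n:ℝ)+2) * Real.sqrt 2) := by
            ring
        _ ≤ 4 * (((n:ℝ)+2) * 2) := by
            apply mul_le_mul_of_nonneg_left hmm (by norm_num)
        _ = 8*((n:ℝ)+2) := by ring
    calc ‖dft (fun x => if x ∈ E then (1:ℂ) else 0) ξ‖ ≤ 2 * t3 := hnorm
      _ = C * (Real.sqrt (m:ℝ) * Real.sqrt (Real.log y)) := h2t3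
      _ ≤ C * ((Real.sqrt 2 * Real.sqrt (E.card:ℝ)) * Real.sqrt (Real.log y)) := by
          apply mul_le_mul_of_nonneg_left ?_ hC0.le
          exact mul_le_mul_of_nonneg_right hsqm (Real.sqrt_nonneg _)
      _ = (C * Real.sqrt 2) * (Real.sqrt (E.card:ℝ) * Real.sqrt (Real.log y)) := by ring
      _ ≤ (8*((n:ℝ)+2)) * (Real.sqrt (E.card:ℝ) * Real.sqrt (Real.log y)) := by
          apply mul_le_mul_of_nonneg_right hCn
          positivity
      _ = 8*((n:ℝ)+2) * Real.sqrt (E.card:ℝ) * Real.sqrt (Real.log y) := by ring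
  · -- intersection with A
    have s4 := hnotBad _ _ _ ω hω4
    rw [hSsum A] at s4
    have hEA : E ∩ A = A.filter (fun x => (ω x).val < m) := by
      rw [hE]
      ext x
      simp only [Finset.mem_inter, Finset.mem_filter, Finset.mem_univ, true_and]
      exact and_comm
    rw [← hEA] at s4
    have hAc0 : (0:ℝ) ≤ (A.card:ℝ) := Nat.cast_nonneg _
    have h1 := mul_le_mul_of_nonneg_right hqsmall hAc0
    have h3 : 0 ≤ η * (A.card:ℝ) := mul_nonneg hη.le hAc0
    linarith only [s4, h1, h3]
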